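/- Let k ≥ 2 and let λ be a shape with at most k−1 rows. Then for every m ≥ 0, W_k^*(λ, m) = Σ_{b=0}^{⌊m/2⌋} (−1)^b · C(m−b, b) · O_k^*(λ, m−2b), where C denotes the binomial coefficient. -/

import Mathlib

/-- The empty shape (Ferrers diagram with no squares). -/
def emptyShape : ℕ → ℕ := fun _ => 0

/-- `f : ℕ → ℕ` represents a shape (integer partition / Ferrers diagram), recording the
number of squares in each row (0-indexed): rows are weakly decreasing and eventually zero. -/
def IsShape (f : ℕ → ℕ) : Prop := (∀ i, f (i + 1) ≤ f i) ∧ ∃ N, f N = 0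

/-- The shape `f` has at most `r` (nonzero) rows. -/
def RowsLE (r : ℕ) (f : ℕ → ℕ) : Prop := f r = 0

/-- `mu` is obtained from `lam` by adding one square in row `j` (0-indexed). -/
def AddSquareAt (j : ℕ) (lam mu : ℕ → ℕ) : Prop :=
  mu j = lam j + 1 ∧ ∀ i, i ≠ j → mu i = lam i

/-- `mu` is obtained from `lam` by adding one square. -/
def AddSquare (lam mu : ℕ → ℕ) : Prop := ∃ j, AddSquareAt j lam mu

/-- `mu` and `lam` differ by exactly one square (added or removed). -/
def OscStep (lam mu : ℕ → ℕ) : Prop := AddSquare lam mu ∨ AddSquare mu lam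

/-- `mu` is obtained from `lam` by adding one square, removing one square, or doing nothing. -/
def StarStep (lam mu : ℕ → ℕ) : Prop := mu = lam ∨ OscStep lam mu

/-- `t` encodes a `*`-tableaux of shape `lam` and length `m`, all of whose shapes have at
most `k - 1` rows: `t 0 = ∅`, `t m = lam`, consecutive shapes differ by at most one square,
and the sequence is padded by `lam` from index `m` on (so that `t` is determined by its
values `t 0, …, t m`). -/
def IsStarTab (k : ℕ) (lam : ℕ → ℕ) (m : ℕ) (t : ℕ → ℕ → ℕ) : Prop :=
  t 0 = emptyShape ∧ (∀ i, m ≤ i → t i = lam) ∧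
  (∀ i, i < m → StarStep (t i) (t (i + 1))) ∧
  ∀ i, IsShape (t i) ∧ RowsLE (k - 1) (t i)

/-- `t` encodes an oscillating tableaux: a `*`-tableaux whose consecutive shapes differ. -/
def IsOscTab (k : ℕ) (lam : ℕ → ℕ) (m : ℕ) (t : ℕ → ℕ → ℕ) : Prop :=
  IsStarTab k lam m t ∧ ∀ i, i < m → t (i + 1) ≠ t i

/-- `O_k^*(lam, m)`: the number of `*`-tableaux of shape `lam` and length `m`, all of whose
shapes have at most `k - 1` rows. -/
noncomputable def Ostar (k : ℕ) (lam : ℕ → ℕ) (m : ℕ) : ℕ :=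
  Nat.card {t : ℕ → ℕ → ℕ // IsStarTab k lam m t}

/-- `O_k^0(lam, m)`: the number of oscillating tableaux of shape `lam` and length `m`, all of
whose shapes have at most `k - 1` rows. -/
noncomputable def Oosc (k : ℕ) (lam : ℕ → ℕ) (m : ℕ) : ℕ :=
  Nat.card {t : ℕ → ℕ → ℕ // IsOscTab k lam m t}

/-- A `(+□₁, −□₁)`-pair at position `i` of a tableaux of length `m`: a square is added in the
first row and immediately removed again. -/
def PairAt (m : ℕ) (t : ℕ → ℕ → ℕ) (i : ℕ) : Prop :=
  i + 2 ≤ m ∧ AddSquareAt 0 (t i) (t (i + 1)) ∧ t (i + 2) = t i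

/-- `Q_k^*(lam, m, j)`: the number of `*`-tableaux of shape `lam` and length `m` with at most
`k - 1` rows containing exactly `j` `(+□₁, −□₁)`-pairs. -/
noncomputable def Qstar (k : ℕ) (lam : ℕ → ℕ) (m j : ℕ) : ℕ :=
  Nat.card {t : ℕ → ℕ → ℕ //
    IsStarTab k lam m t ∧ Nat.card {i : ℕ // PairAt m t i} = j}

/-- `W_k^*(lam, m)`: the number of `*`-tableaux of shape `lam` and length `m` with at most
`k - 1` rows containing no `(+□₁, −□₁)`-pair. -/
noncomputable def Wstar (k : ℕ) (lam : ℕ → ℕ) (m : ℕ) : ℕ :=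
  Nat.card {t : ℕ → ℕ → ℕ // IsStarTab k lam m t ∧ ∀ i, ¬ PairAt m t i}

/-- `M` is a partial matching on `[n] = {1, …, n}`: a set of arcs `(i, j)` with
`1 ≤ i < j ≤ n` such that every vertex lies in at most one arc. -/
def IsPartialMatching (n : ℕ) (M : Finset (ℕ × ℕ)) : Prop :=
  (∀ p ∈ M, 1 ≤ p.1 ∧ p.1 < p.2 ∧ p.2 ≤ n) ∧
  ∀ p ∈ M, ∀ q ∈ M, p ≠ q → p.1 ≠ q.1 ∧ p.1 ≠ q.2 ∧ p.2 ≠ q.1 ∧ p.2 ≠ q.2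

/-- `M` contains a `k`-crossing: arcs `(i₁,j₁), …, (i_k,j_k)` with
`i₁ < ⋯ < i_k < j₁ < ⋯ < j_k`. -/
def HasKCrossing (k : ℕ) (M : Finset (ℕ × ℕ)) : Prop :=
  ∃ a : Fin k → ℕ × ℕ, (∀ i, a i ∈ M) ∧
    (∀ i j, i < j → (a i).1 < (a j).1) ∧
    (∀ i j, i < j → (a i).2 < (a j).2) ∧
    ∀ i j, (a i).1 < (a j).2

/-- `M` is a `k`-noncrossing partial matching on `[n]`. -/
def KNoncrossingPM (k n : ℕ) (M : Finset (ℕ × ℕ)) : Prop :=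
  IsPartialMatching n M ∧ ¬ HasKCrossing k M

/-- `f_k^*(n)`: the number of `k`-noncrossing partial matchings on `[n]`. -/
noncomputable def fstar (k n : ℕ) : ℕ :=
  Nat.card {M : Finset (ℕ × ℕ) // KNoncrossingPM k n M}

/-- `M` is a matching on `[n]`: a partial matching in which every vertex lies in an arc. -/
def IsMatching (n : ℕ) (M : Finset (ℕ × ℕ)) : Prop :=
  IsPartialMatching n M ∧ ∀ v, 1 ≤ v → v ≤ n → ∃ p ∈ M, p.1 = v ∨ p.2 = v

/-- `f_k(n)`: the number of `k`-noncrossing matchings on `[n]`. -/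
noncomputable def fmatch (k n : ℕ) : ℕ :=
  Nat.card {M : Finset (ℕ × ℕ) // IsMatching n M ∧ ¬ HasKCrossing k M}

/-- `M` is a `k`-noncrossing RNA structure on `[n]`: a `k`-noncrossing partial matching
without `1`-arcs `(i, i+1)`. -/
def IsRNA (k n : ℕ) (M : Finset (ℕ × ℕ)) : Prop :=
  KNoncrossingPM k n M ∧ ∀ i, (i, i + 1) ∉ M

/-- `S_k(n)`: the number of `k`-noncrossing RNA structures on `[n]`. -/
noncomputable def Snum (k n : ℕ) : ℕ :=
  Nat.card {M : Finset (ℕ × ℕ) // IsRNA k n M}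

/-- `F(n, h)`: the number of `±1`-sequences of length `n` with all partial sums nonnegative
and total sum `h` (lattice paths from `(0,0)` to `(n,h)` staying in the first quadrant). -/
noncomputable def Fpath (n h : ℕ) : ℕ :=
  Nat.card {s : Fin n → ℤ // (∀ i, s i = 1 ∨ s i = -1) ∧
    (∀ m : ℕ, 0 ≤ ∑ i ∈ Finset.univ.filter (fun i : Fin n => (i : ℕ) < m), s i) ∧
    (∑ i, s i) = (h : ℤ)}

/-- The two-row shape `(x₁, x₂)`. -/
def twoRowShape (x1 x2 : ℕ) : ℕ → ℕ :=
  fun i => if i = 0 then x1 else if i = 1 then x2 else 0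

/-- Add one square to row `h` (0-indexed) of `f`. -/
def addRow (h : ℕ) (f : ℕ → ℕ) : ℕ → ℕ := fun i => if i = h then f i + 1 else f i

/-- Remove one square from row `h` (0-indexed) of `f`. -/
def subRow (h : ℕ) (f : ℕ → ℕ) : ℕ → ℕ := fun i => if i = h then f i - 1 else f i

/-- `V_k^*(ν, m) = W_k^*(ν, m) − W_k^*(ν⁻, m−1)`, where `ν⁻` is `ν` with one square removed
from the first row, and the second term is `0` if `ν` has an empty first row (invalid `ν⁻`). -/
noncomputable def Vstar (k : ℕ) (nu : ℕ → ℕ) (m : ℕ) : ℤ :=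
  (Wstar k nu m : ℤ) - if 0 < nu 0 then (Wstar k (subRow 0 nu) (m - 1) : ℤ) else 0

/-- The hyperbolic Bessel function of the first kind of order `r` evaluated at `2x`, as a
formal power series: `I_r(2x) = Σ_{j ≥ max(0,−r)} x^{2j+r}/(j!·(r+j)!)`. -/
noncomputable def besselI (r : ℤ) : PowerSeries ℚ :=
  PowerSeries.mk fun n =>
    if r.natAbs ≤ n ∧ (n : ℤ) % 2 = r % 2 then
      (1 : ℚ) / (((((n : ℤ) - r) / 2).toNat.factorial * ((((n : ℤ) + r) / 2).toNat.factorial) : ℕ) : ℚ)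
    else 0

section StarAux

open Finset

lemma shape_mono {f : ℕ → ℕ} (hf : ∀ i, f (i + 1) ≤ f i) {a b : ℕ} (h : a ≤ b) :
    f b ≤ f a := by
  induction b with
  | zero => simp_all
  | succ b ih =>
    rcases Nat.lt_or_ge a (b+1) with h' | h'
    · exact le_trans (hf b) (ih (by omega))
    · have : a = b + 1 := by omega
      subst this; rfl

lemma shape_zero {f : ℕ → ℕ} (hf : ∀ i, f (i + 1) ≤ f i) {r j : ℕ} (h : f r = 0)
    (hj : r ≤ j) : f j = 0 :=
  Nat.le_zero.mp (h ▸ shape_mono hf hj)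

@[simp] lemma addRow_same (j : ℕ) (lam : ℕ → ℕ) : addRow j lam j = lam j + 1 := by
  simp [addRow]

lemma addRow_other {i j : ℕ} (lam : ℕ → ℕ) (h : i ≠ j) : addRow j lam i = lam i := by
  simp [addRow, h]

@[simp] lemma subRow_same (j : ℕ) (lam : ℕ → ℕ) : subRow j lam j = lam j - 1 := by
  simp [subRow]

lemma subRow_other {i j : ℕ} (lam : ℕ → ℕ) (h : i ≠ j) : subRow j lam i = lam i := by
  simp [subRow, h]

abbrev MoveT (k : ℕ) := Option (Bool × Fin (k - 1))

def mapply {k : ℕ} (mv : MoveT k) (lam : ℕ → ℕ) : ℕ → ℕ :=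
  match mv with
  | none => lam
  | some (true, j) => addRow j lam
  | some (false, j) => subRow j lam

def mok {k : ℕ} (mv : MoveT k) (lam : ℕ → ℕ) : Prop :=
  match mv with
  | none => True
  | some (true, j) => (j : ℕ) = 0 ∨ lam j < lam ((j : ℕ) - 1)
  | some (false, j) => lam ((j : ℕ) + 1) < lam (j : ℕ)

instance {k : ℕ} : ∀ (mv : MoveT k) (lam : ℕ → ℕ), Decidable (mok mv lam)
  | none, _ => isTrue trivial
  | some (true, _), _ => inferInstanceAs (Decidable (_ ∨ _))
  | some (false, _), _ => inferInstanceAs (Decidable (_ < _))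

lemma mapply_none {k : ℕ} (lam : ℕ → ℕ) : mapply (k := k) none lam = lam := rfl
lemma mapply_add {k : ℕ} (j : Fin (k - 1)) (lam : ℕ → ℕ) :
    mapply (some (true, j)) lam = addRow j lam := rfl
lemma mapply_sub {k : ℕ} (j : Fin (k - 1)) (lam : ℕ → ℕ) :
    mapply (some (false, j)) lam = subRow j lam := rfl

lemma mapply_shape {k : ℕ} {mv : MoveT k} {lam : ℕ → ℕ} (hs : IsShape lam)
    (hr : RowsLE (k - 1) lam) (h : mok mv lam) :
    IsShape (mapply mv lam) ∧ RowsLE (k - 1) (mapply mv lam) := by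
  obtain ⟨hdec, N, hN⟩ := hs
  have hz : ∀ j, k - 1 ≤ j → lam j = 0 := fun j hj => shape_zero hdec hr hj
  match mv with
  | none => exact ⟨⟨hdec, N, hN⟩, hr⟩
  | some (true, j) =>
    simp only [mok] at h
    have hj : (j : ℕ) < k - 1 := j.2
    rw [mapply_add]
    refine ⟨⟨?_, ⟨k - 1, ?_⟩⟩, ?_⟩
    · intro i
      rcases eq_or_ne (i + 1) (j : ℕ) with h1 | h1
      · have h2 : i ≠ (j : ℕ) := by omega
        rw [addRow_other lam h2]
        rcases h with h | h
        · omega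
        · have h3 : (j : ℕ) - 1 = i := by omega
          rw [h3] at h; rw [h1, addRow_same]; omega
      · rcases eq_or_ne i (j : ℕ) with h2 | h2
        · rw [addRow_other lam h1, h2, addRow_same]
          have := hdec i; rw [h2] at this; omega
        · rw [addRow_other lam h1, addRow_other lam h2]; exact hdec i
    · rw [addRow_other lam (by omega)]; exact hz _ le_rfl
    · show addRow (j : ℕ) lam (k - 1) = 0
      rw [addRow_other lam (by omega)]; exact hz _ le_rfl
  | some (false, j) =>
    simp only [mok] at h
    have hj : (j : ℕ) < k - 1 := j.2
    rw [mapply_sub]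
    refine ⟨⟨?_, ⟨k - 1, ?_⟩⟩, ?_⟩
    · intro i
      rcases eq_or_ne (i + 1) (j : ℕ) with h1 | h1
      · have h2 : i ≠ (j : ℕ) := by omega
        rw [subRow_other lam h2, h1, subRow_same]
        have := hdec i; rw [h1] at this; omega
      · rcases eq_or_ne i (j : ℕ) with h2 | h2
        · rw [subRow_other lam h1, h2, subRow_same]
          have := hdec i; rw [h2] at this; omega
        · rw [subRow_other lam h1, subRow_other lam h2]; exact hdec i
    · rw [subRow_other lam (by omega)]; exact hz _ le_rfl
    · show subRow (j : ℕ) lam (k - 1) = 0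
      rw [subRow_other lam (by omega)]; exact hz _ le_rfl

lemma mapply_star {k : ℕ} {mv : MoveT k} {lam : ℕ → ℕ} (h : mok mv lam) :
    StarStep (mapply mv lam) lam := by
  match mv with
  | none => exact Or.inl rfl
  | some (true, j) =>
    refine Or.inr (Or.inr ⟨j, ?_, ?_⟩)
    · rw [mapply_add, addRow_same]
    · intro i hi; rw [mapply_add, addRow_other lam hi]
  | some (false, j) =>
    simp only [mok] at h
    refine Or.inr (Or.inl ⟨j, ?_, ?_⟩)
    · rw [mapply_sub, subRow_same]; omega
    · intro i hi; rw [mapply_sub, subRow_other lam hi]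

lemma mapply_inj {k : ℕ} {mv mv' : MoveT k} {lam : ℕ → ℕ} (h : mok mv lam)
    (h' : mok mv' lam) (he : mapply mv lam = mapply mv' lam) : mv = mv' := by
  match mv, mv' with
  | none, none => rfl
  | none, some (true, j) =>
    have := congrFun he j; rw [mapply_none, mapply_add, addRow_same] at this; omega
  | none, some (false, j) =>
    have := congrFun he j; rw [mapply_none, mapply_sub, subRow_same] at this
    simp only [mok] at h'; omega
  | some (true, j), none =>
    have := congrFun he j; rw [mapply_none, mapply_add, addRow_same] at this; omega
  | some (false, j), none =>
    have := congrFun he j; rw [mapply_none, mapply_sub, subRow_same] at this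
    simp only [mok] at h; omega
  | some (true, j), some (true, j') =>
    rcases eq_or_ne (j : ℕ) (j' : ℕ) with hj | hj
    · congr 2; exact Fin.ext hj
    · have := congrFun he j
      rw [mapply_add, mapply_add, addRow_same, addRow_other lam hj] at this; omega
  | some (true, j), some (false, j') =>
    have := congrFun he j
    rw [mapply_add, mapply_sub, addRow_same] at this
    rcases eq_or_ne (j : ℕ) (j' : ℕ) with hj | hj
    · rw [hj, subRow_same] at this; omega
    · rw [subRow_other lam hj] at this; omega
  | some (false, j), some (true, j') =>
    have := congrFun he j
    rw [mapply_sub, mapply_add, subRow_same] at this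
    simp only [mok] at h
    rcases eq_or_ne (j : ℕ) (j' : ℕ) with hj | hj
    · rw [hj, addRow_same] at this; omega
    · rw [addRow_other lam hj] at this; omega
  | some (false, j), some (false, j') =>
    rcases eq_or_ne (j : ℕ) (j' : ℕ) with hj | hj
    · congr 2; exact Fin.ext hj
    · have := congrFun he j
      rw [mapply_sub, mapply_sub, subRow_same, subRow_other lam hj] at this
      simp only [mok] at h; omega

lemma step_mem {k : ℕ} {lam mu : ℕ → ℕ} (hs : IsShape lam) (hr : RowsLE (k - 1) lam)
    (hms : IsShape mu) (hmr : RowsLE (k - 1) mu) (hstep : StarStep mu lam) :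
    ∃ mv : MoveT k, mok mv lam ∧ mapply mv lam = mu := by
  rcases hstep with heq | hosc
  · exact ⟨none, trivial, heq⟩
  rcases hosc with ⟨j0, hj1, hj2⟩ | ⟨j0, hj1, hj2⟩
  · -- AddSquare mu lam : lam j0 = mu j0 + 1, ∀ i ≠ j0, lam i = mu i
    have hjlt : j0 < k - 1 := by
      by_contra hc
      have := shape_zero hs.1 hr (le_of_not_gt hc)
      omega
    refine ⟨some (false, ⟨j0, hjlt⟩), ?_, ?_⟩
    · simp only [mok, Fin.val_mk]
      have h1 : lam (j0 + 1) = mu (j0 + 1) := hj2 _ (by omega)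
      have h2 : mu (j0 + 1) ≤ mu j0 := hms.1 j0
      omega
    · funext i
      rw [mapply_sub]
      simp only [Fin.val_mk]
      rcases eq_or_ne i j0 with h | h
      · subst h; rw [subRow_same]; omega
      · rw [subRow_other lam h]; exact hj2 i h
  · -- AddSquare lam mu : mu j0 = lam j0 + 1, ∀ i ≠ j0, mu i = lam i
    have hjlt : j0 < k - 1 := by
      by_contra hc
      have := shape_zero hms.1 hmr (le_of_not_gt hc)
      omega
    refine ⟨some (true, ⟨j0, hjlt⟩), ?_, ?_⟩
    · simp only [mok, Fin.val_mk]
      rcases Nat.eq_zero_or_pos j0 with h0 | h0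
      · exact Or.inl h0
      · refine Or.inr ?_
        have h1 : mu (j0 - 1) = lam (j0 - 1) := hj2 _ (by omega)
        have h2 : mu j0 ≤ mu (j0 - 1 + 1) := le_of_eq (by congr 1; omega)
        have h3 : mu (j0 - 1 + 1) ≤ mu (j0 - 1) := hms.1 _
        omega
    · funext i
      rw [mapply_add]
      simp only [Fin.val_mk]
      rcases eq_or_ne i j0 with h | h
      · subst h; rw [addRow_same]; omega
      · rw [addRow_other lam h]; exact (hj2 i h).symm

end StarAux
section TabAux

open Finset

variable {k m : ℕ} {lam mu : ℕ → ℕ} {t s : ℕ → ℕ → ℕ}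

lemma tab_bound (h : IsStarTab k lam m t) : ∀ i, i ≤ m → ∀ j, t i j ≤ i := by
  intro i
  induction i with
  | zero => intro _ j; rw [h.1]; exact Nat.le_refl 0
  | succ i ih =>
    intro hi j
    have hstep := h.2.2.1 i (by omega)
    have hb := ih (by omega)
    rcases hstep with heq | hosc
    · rw [heq]; exact le_trans (hb j) (by omega)
    rcases hosc with ⟨j0, h1, h2⟩ | ⟨j0, h1, h2⟩
    · rcases eq_or_ne j j0 with hj | hj
      · subst hj; rw [h1]; exact Nat.succ_le_succ (hb j)
      · rw [h2 j hj]; exact le_trans (hb j) (by omega)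
    · rcases eq_or_ne j j0 with hj | hj
      · subst hj; have := hb j; omega
      · rw [← h2 j hj]; exact le_trans (hb j) (by omega)

lemma tab_rows (h : IsStarTab k lam m t) (i j : ℕ) (hj : k - 1 ≤ j) : t i j = 0 :=
  shape_zero ((h.2.2.2 i).1).1 ((h.2.2.2 i).2) hj

instance starTabFinite : Finite {t : ℕ → ℕ → ℕ // IsStarTab k lam m t} := by
  apply Finite.of_injective
    (fun t => (fun (i : Fin (m + 1)) (j : Fin k) =>
      (⟨t.1 i j, by
        have := tab_bound t.2 i (by omega) j
        omega⟩ : Fin (m + 1))))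
  intro a b hab
  apply Subtype.ext
  funext i j
  rcases Nat.lt_or_ge j k with hj | hj
  · rcases Nat.lt_or_ge i (m + 1) with hi | hi
    · exact congrArg Fin.val (congrFun (congrFun hab ⟨i, hi⟩) ⟨j, hj⟩)
    · rw [a.2.2.1 i (by omega), b.2.2.1 i (by omega)]
  · rw [tab_rows a.2 i j (by omega), tab_rows b.2 i j (by omega)]

instance starTabPairFinite :
    Finite {t : ℕ → ℕ → ℕ // IsStarTab k lam m t ∧ ∀ i, ¬ PairAt m t i} := by
  apply Finite.of_injective
    (fun t => (⟨t.1, t.2.1⟩ : {t : ℕ → ℕ → ℕ // IsStarTab k lam m t}))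
  intro a b hab
  simp only [Subtype.mk.injEq] at hab
  exact Subtype.ext hab

/-- Extend a length-`m` tableau ending at `mu` to a length-`m+1` tableau ending at `lam`. -/
def extT (m : ℕ) (lam : ℕ → ℕ) (s : ℕ → ℕ → ℕ) : ℕ → ℕ → ℕ :=
  fun i => if i ≤ m then s i else lam

/-- Truncate a length-`m+1` tableau to a length-`m` tableau. -/
def truncT (m : ℕ) (t : ℕ → ℕ → ℕ) : ℕ → ℕ → ℕ :=
  fun i => if i ≤ m then t i else t m

lemma extT_le {i : ℕ} (h : i ≤ m) : extT m lam s i = s i := if_pos h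

lemma truncT_le {i : ℕ} (h : i ≤ m) : truncT m t i = t i := if_pos h

lemma extT_tab (hs : IsStarTab k mu m s) (hls : IsShape lam) (hlr : RowsLE (k - 1) lam)
    (hstep : StarStep mu lam) : IsStarTab k lam (m + 1) (extT m lam s) := by
  refine ⟨?_, ?_, ?_, ?_⟩
  · rw [extT_le (by omega)]; exact hs.1
  · intro i hi
    simp only [extT, if_neg (by omega : ¬ i ≤ m)]
  · intro i hi
    rcases Nat.lt_or_ge i m with h | h
    · rw [extT_le (by omega), extT_le (by omega)]
      exact hs.2.2.1 i h
    · have him : i = m := by omega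
      rw [him, extT_le le_rfl]
      simp only [extT, if_neg (by omega : ¬ m + 1 ≤ m)]
      rw [hs.2.1 m le_rfl]
      exact hstep
  · intro i
    by_cases h : i ≤ m
    · rw [extT_le h]; exact hs.2.2.2 i
    · simp only [extT, if_neg h]; exact ⟨hls, hlr⟩

lemma truncT_tab (ht : IsStarTab k lam (m + 1) t) : IsStarTab k (t m) m (truncT m t) := by
  refine ⟨?_, ?_, ?_, ?_⟩
  · rw [truncT_le (by omega)]; exact ht.1
  · intro i hi
    by_cases h : i ≤ m
    · have him : i = m := by omega
      rw [him, truncT_le le_rfl]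
    · simp only [truncT, if_neg h]
  · intro i hi
    rw [truncT_le (by omega), truncT_le (by omega)]
    exact ht.2.2.1 i (by omega)
  · intro i
    by_cases h : i ≤ m
    · rw [truncT_le h]; exact ht.2.2.2 i
    · simp only [truncT, if_neg h]; exact ht.2.2.2 m

lemma extT_truncT (ht : IsStarTab k lam (m + 1) t) : extT m lam (truncT m t) = t := by
  funext i
  by_cases h : i ≤ m
  · rw [extT_le h, truncT_le h]
  · simp only [extT, if_neg h]
    exact (ht.2.1 i (by omega)).symm

lemma truncT_extT (hs : IsStarTab k mu m s) : truncT m (extT m lam s) = s := by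
  funext i
  by_cases h : i ≤ m
  · rw [truncT_le h, extT_le h]
  · simp only [truncT, if_neg h, extT, if_pos le_rfl]
    exact (hs.2.1 m le_rfl).trans (hs.2.1 i (by omega)).symm

end TabAux
section RecAux

open Finset

variable {k m : ℕ} {lam mu : ℕ → ℕ}

/-- Cardinality of a sigma over valid moves, as a sum with indicators. -/
lemma card_sigma_moves (k : ℕ) (lam : ℕ → ℕ) (C : (ℕ → ℕ) → Type)
    [∀ nu, Finite (C nu)] :
    Nat.card (Σ mv : {mv : MoveT k // mok mv lam}, C (mapply mv.1 lam)) =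
      ∑ mv : MoveT k, if mok mv lam then Nat.card (C (mapply mv lam)) else 0 := by
  classical
  letI : ∀ mv : {mv : MoveT k // mok mv lam}, Fintype (C (mapply mv.1 lam)) :=
    fun _ => Fintype.ofFinite _
  rw [Nat.card_eq_fintype_card, Fintype.card_sigma]
  rw [← Finset.sum_filter]
  rw [Finset.sum_subtype (p := fun mv => mok mv lam)
    (Finset.univ.filter fun mv => mok mv lam)
    (by intro x; simp) (fun mv => Nat.card (C (mapply mv lam)))]
  exact Finset.sum_congr rfl fun mv _ => (Nat.card_eq_fintype_card).symm

lemma ostar_rec (hs : IsShape lam) (hr : RowsLE (k - 1) lam) (m : ℕ) :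
    Ostar k lam (m + 1) =
      ∑ mv : MoveT k, if mok mv lam then Ostar k (mapply mv lam) m else 0 := by
  classical
  have key : Nat.card {t : ℕ → ℕ → ℕ // IsStarTab k lam (m + 1) t} =
      Nat.card (Σ mv : {mv : MoveT k // mok mv lam},
        {t : ℕ → ℕ → ℕ // IsStarTab k (mapply mv.1 lam) m t}) := by
    refine (Nat.card_eq_of_bijective
      (fun p => ⟨extT m lam p.2.1, extT_tab p.2.2 hs hr (mapply_star p.1.2)⟩)
      ⟨?_, ?_⟩).symm
    · rintro ⟨⟨mv, hmv⟩, ⟨s, hsm⟩⟩ ⟨⟨mv', hmv'⟩, ⟨s', hsm'⟩⟩ h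
      have he : extT m lam s = extT m lam s' := congrArg Subtype.val h
      have h1 : s m = s' m := by
        have := congrFun he m
        rwa [extT_le le_rfl, extT_le le_rfl] at this
      have hmveq : mv = mv' := by
        apply mapply_inj hmv hmv'
        rw [hsm.2.1 m le_rfl] at h1
        rw [hsm'.2.1 m le_rfl] at h1
        exact h1
      subst hmveq
      have hseq : s = s' := by
        rw [← truncT_extT (lam := lam) hsm, ← truncT_extT (lam := lam) hsm', he]
      subst hseq
      rfl
    · rintro ⟨t, ht⟩
      have hstep : StarStep (t m) lam := by
        have := ht.2.2.1 m (by omega)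
        rwa [ht.2.1 (m + 1) le_rfl] at this
      obtain ⟨mv, hmv, hmap⟩ :=
        step_mem hs hr (ht.2.2.2 m).1 (ht.2.2.2 m).2 hstep
      refine ⟨⟨⟨mv, hmv⟩, ⟨truncT m t, ?_⟩⟩, ?_⟩
      · rw [hmap]; exact truncT_tab ht
      · exact Subtype.ext (extT_truncT ht)
  exact key.trans (card_sigma_moves k lam
    (fun nu => {t : ℕ → ℕ → ℕ // IsStarTab k nu m t}))

end RecAux
section WAux

open Finset

variable {k m : ℕ} {lam : ℕ → ℕ}

lemma wstar_le_one (h : m ≤ 1) : Wstar k lam m = Ostar k lam m := by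
  apply Nat.card_congr
  apply Equiv.subtypeEquivRight
  intro t
  constructor
  · exact fun h' => h'.1
  · intro h1
    exact ⟨h1, fun i hp => by have := hp.1; omega⟩

lemma addSquareAt0_addRow (nu : ℕ → ℕ) : AddSquareAt 0 nu (addRow 0 nu) :=
  ⟨addRow_same 0 nu, fun i hi => addRow_other nu hi⟩

lemma bad_inr {mv : MoveT k} {s : ℕ → ℕ → ℕ}
    (hs1 : IsStarTab k (mapply mv lam) (m + 1) s)
    (hs2 : ∀ i, ¬ PairAt (m + 1) s i) (hb1 : s m = lam) :
    IsStarTab k lam m (truncT m s) ∧ ∀ i, ¬ PairAt m (truncT m s) i := by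
  constructor
  · have := truncT_tab hs1
    rwa [hb1] at this
  · intro i hp
    obtain ⟨hle, hadd, heq⟩ := hp
    apply hs2 i
    refine ⟨by omega, ?_, ?_⟩
    · rwa [truncT_le (by omega : i ≤ m), truncT_le (by omega : i + 1 ≤ m)] at hadd
    · rwa [truncT_le (by omega : i + 2 ≤ m), truncT_le (by omega : i ≤ m)] at heq

lemma good_inl (hs : IsShape lam) (hr : RowsLE (k - 1) lam) {mv : MoveT k}
    (hmv : mok mv lam) {s : ℕ → ℕ → ℕ}
    (hs1 : IsStarTab k (mapply mv lam) (m + 1) s)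
    (hs2 : ∀ i, ¬ PairAt (m + 1) s i)
    (hbad : ¬ (s m = lam ∧ mapply mv lam = addRow 0 lam)) :
    IsStarTab k lam (m + 2) (extT (m + 1) lam s) ∧
      ∀ i, ¬ PairAt (m + 2) (extT (m + 1) lam s) i := by
  constructor
  · exact extT_tab hs1 hs hr (mapply_star hmv)
  · intro i hp
    obtain ⟨hle, hadd, heq⟩ := hp
    rcases Nat.lt_or_ge (i + 2) (m + 2) with hlt | hge
    · apply hs2 i
      refine ⟨by omega, ?_, ?_⟩
      · rwa [extT_le (by omega : i ≤ m + 1), extT_le (by omega : i + 1 ≤ m + 1)] at hadd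
      · rwa [extT_le (by omega : i + 2 ≤ m + 1), extT_le (by omega : i ≤ m + 1)] at heq
    · have hi : i = m := by omega
      rw [extT_le (by omega : i ≤ m + 1), extT_le (by omega : i + 1 ≤ m + 1)] at hadd
      rw [extT_le (by omega : i ≤ m + 1)] at heq
      have hv : extT (m + 1) lam s (i + 2) = lam := if_neg (by omega)
      rw [hv] at heq
      apply hbad
      have hsm1 : s (i + 1) = mapply mv lam := hs1.2.1 (i + 1) (by omega)
      refine ⟨by rw [← hi]; exact heq.symm, ?_⟩
      funext jj
      rcases eq_or_ne jj 0 with hj | hj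
      · subst hj
        rw [← hsm1, addRow_same, hadd.1, heq]
      · rw [← hsm1, addRow_other lam hj, hadd.2 jj hj, heq]

lemma wstar_rec (hk : 2 ≤ k) (hs : IsShape lam) (hr : RowsLE (k - 1) lam) (m : ℕ) :
    (∑ mv : MoveT k, if mok mv lam then Wstar k (mapply mv lam) (m + 1) else 0) =
      Wstar k lam (m + 2) + Wstar k lam m := by
  classical
  have key : Nat.card (Σ mv : {mv : MoveT k // mok mv lam},
      {s : ℕ → ℕ → ℕ // IsStarTab k (mapply mv.1 lam) (m + 1) s ∧
        ∀ i, ¬ PairAt (m + 1) s i}) =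
      Nat.card ({t : ℕ → ℕ → ℕ // IsStarTab k lam (m + 2) t ∧ ∀ i, ¬ PairAt (m + 2) t i} ⊕
        {t : ℕ → ℕ → ℕ // IsStarTab k lam m t ∧ ∀ i, ¬ PairAt m t i}) := by
    apply Nat.card_eq_of_bijective
      (fun p =>
        if hbad : p.2.1 m = lam ∧ mapply p.1.1 lam = addRow 0 lam then
          Sum.inr ⟨truncT m p.2.1, bad_inr p.2.2.1 p.2.2.2 hbad.1⟩
        else
          Sum.inl ⟨extT (m + 1) lam p.2.1, good_inl hs hr p.1.2 p.2.2.1 p.2.2.2 hbad⟩)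
    constructor
    · rintro ⟨⟨mv, hmv⟩, ⟨s, hs1, hs2⟩⟩ ⟨⟨mv', hmv'⟩, ⟨s', hs1', hs2'⟩⟩ h
      dsimp only at h
      by_cases hb : s m = lam ∧ mapply mv lam = addRow 0 lam <;>
        by_cases hb' : s' m = lam ∧ mapply mv' lam = addRow 0 lam
      · rw [dif_pos hb, dif_pos hb'] at h
        have htr : truncT m s = truncT m s' := by
          have := Sum.inr.inj h
          exact congrArg Subtype.val this
        have hmveq : mv = mv' := mapply_inj hmv hmv' (hb.2.trans hb'.2.symm)
        subst hmveq
        have hseq : s = s' := by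
          rw [← extT_truncT hs1, ← extT_truncT hs1', htr]
        subst hseq
        rfl
      · rw [dif_pos hb, dif_neg hb'] at h
        exact absurd h (fun h => Sum.inr_ne_inl h)
      · rw [dif_neg hb, dif_pos hb'] at h
        exact absurd h (fun h => Sum.inl_ne_inr h)
      · rw [dif_neg hb, dif_neg hb'] at h
        have hext : extT (m + 1) lam s = extT (m + 1) lam s' := by
          have := Sum.inl.inj h
          exact congrArg Subtype.val this
        have h1 : s (m + 1) = s' (m + 1) := by
          have := congrFun hext (m + 1)
          rwa [extT_le le_rfl, extT_le le_rfl] at this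
        have hmveq : mv = mv' := by
          apply mapply_inj hmv hmv'
          rw [hs1.2.1 (m + 1) le_rfl] at h1
          rw [hs1'.2.1 (m + 1) le_rfl] at h1
          exact h1
        subst hmveq
        have hseq : s = s' := by
          rw [← truncT_extT (lam := lam) hs1, ← truncT_extT (lam := lam) hs1', hext]
        subst hseq
        rfl
    · rintro (⟨t, ht1, ht2⟩ | ⟨w, hw1, hw2⟩)
      · have hstep : StarStep (t (m + 1)) lam := by
          have := ht1.2.2.1 (m + 1) (by omega)
          rwa [ht1.2.1 (m + 2) le_rfl] at this
        obtain ⟨mv, hmv, hmap⟩ :=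
          step_mem hs hr (ht1.2.2.2 (m + 1)).1 (ht1.2.2.2 (m + 1)).2 hstep
        have htr1 : IsStarTab k (mapply mv lam) (m + 1) (truncT (m + 1) t) := by
          rw [hmap]; exact truncT_tab ht1
        have htr2 : ∀ i, ¬ PairAt (m + 1) (truncT (m + 1) t) i := by
          intro i hp
          obtain ⟨hle, hadd, heq⟩ := hp
          apply ht2 i
          refine ⟨by omega, ?_, ?_⟩
          · rwa [truncT_le (by omega : i ≤ m + 1),
              truncT_le (by omega : i + 1 ≤ m + 1)] at hadd
          · rwa [truncT_le (by omega : i + 2 ≤ m + 1),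
              truncT_le (by omega : i ≤ m + 1)] at heq
        refine ⟨⟨⟨mv, hmv⟩, ⟨truncT (m + 1) t, htr1, htr2⟩⟩, ?_⟩
        have hnotbad : ¬ (truncT (m + 1) t m = lam ∧ mapply mv lam = addRow 0 lam) := by
          rintro ⟨hb1, hb2⟩
          rw [truncT_le (by omega : m ≤ m + 1)] at hb1
          apply ht2 m
          refine ⟨le_rfl, ?_, ?_⟩
          · rw [hb1]
            have : t (m + 1) = addRow 0 lam := by rw [hmap] at hb2; exact hb2
            rw [this]
            exact addSquareAt0_addRow lam
          · rw [ht1.2.1 (m + 2) le_rfl, hb1]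
        dsimp only
        rw [dif_neg hnotbad]
        exact congrArg Sum.inl (Subtype.ext (extT_truncT ht1))
      · have h0 : 0 < k - 1 := by omega
        set mv : MoveT k := some (true, ⟨0, h0⟩) with hmvdef
        have hmv : mok mv lam := Or.inl rfl
        have hmap : mapply mv lam = addRow 0 lam := rfl
        have hsh := mapply_shape hs hr hmv
        have hstep : StarStep lam (mapply mv lam) := by
          rw [hmap]
          exact Or.inr (Or.inl ⟨0, addSquareAt0_addRow lam⟩)
        have hext1 : IsStarTab k (mapply mv lam) (m + 1) (extT m (mapply mv lam) w) :=
          extT_tab hw1 hsh.1 hsh.2 hstep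
        have hext2 : ∀ i, ¬ PairAt (m + 1) (extT m (mapply mv lam) w) i := by
          intro i hp
          obtain ⟨hle, hadd, heq⟩ := hp
          rcases Nat.lt_or_ge (i + 2) (m + 1) with hlt | hge
          · apply hw2 i
            refine ⟨by omega, ?_, ?_⟩
            · rwa [extT_le (by omega : i ≤ m), extT_le (by omega : i + 1 ≤ m)] at hadd
            · rwa [extT_le (by omega : i + 2 ≤ m), extT_le (by omega : i ≤ m)] at heq
          · have hi2 : i + 2 = m + 1 := by omega
            rw [extT_le (by omega : i ≤ m), extT_le (by omega : i + 1 ≤ m)] at hadd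
            have hv : extT m (mapply mv lam) w (i + 2) = mapply mv lam :=
              if_neg (by omega)
            rw [extT_le (by omega : i ≤ m), hv] at heq
            have hwm : w (i + 1) = lam := by
              have hm : i + 1 = m := by omega
              rw [hm]
              exact hw1.2.1 m le_rfl
            have h1 : w (i + 1) 0 = w i 0 + 1 := hadd.1
            have h2 : w i 0 = lam 0 + 1 := by
              rw [← heq, hmap, addRow_same]
            rw [hwm] at h1
            omega
        refine ⟨⟨⟨mv, hmv⟩, ⟨extT m (mapply mv lam) w, hext1, hext2⟩⟩, ?_⟩
        have hbad : extT m (mapply mv lam) w m = lam ∧ mapply mv lam = addRow 0 lam := by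
          refine ⟨?_, hmap⟩
          rw [extT_le le_rfl]
          exact hw1.2.1 m le_rfl
        dsimp only
        rw [dif_pos hbad]
        exact congrArg Sum.inr (Subtype.ext (truncT_extT hw1))
  calc (∑ mv : MoveT k, if mok mv lam then Wstar k (mapply mv lam) (m + 1) else 0)
      = Nat.card (Σ mv : {mv : MoveT k // mok mv lam},
          {s : ℕ → ℕ → ℕ // IsStarTab k (mapply mv.1 lam) (m + 1) s ∧
            ∀ i, ¬ PairAt (m + 1) s i}) := by
        rw [card_sigma_moves k lam
          (fun nu => {s : ℕ → ℕ → ℕ // IsStarTab k nu (m + 1) s ∧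
            ∀ i, ¬ PairAt (m + 1) s i})]
        rfl
    _ = _ := key
    _ = Wstar k lam (m + 2) + Wstar k lam m := Nat.card_sum

end WAux
section Pascal

open Finset

lemma pascal_step (A : ℕ → ℤ) (n : ℕ) :
    ((∑ b ∈ Finset.range ((n + 1) / 2 + 1),
        (-1 : ℤ) ^ b * ((n + 1 - b).choose b : ℤ) * A (n + 2 - 2 * b)) -
      ∑ b ∈ Finset.range (n / 2 + 1),
        (-1 : ℤ) ^ b * ((n - b).choose b : ℤ) * A (n - 2 * b)) =
    ∑ b ∈ Finset.range ((n + 2) / 2 + 1),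
        (-1 : ℤ) ^ b * ((n + 2 - b).choose b : ℤ) * A (n + 2 - 2 * b) := by
  have hS1ext : (∑ c ∈ Finset.range ((n + 1) / 2),
        (-1 : ℤ) ^ c * ((n - c).choose (c + 1) : ℤ) * A (n - 2 * c)) =
      ∑ c ∈ Finset.range (n / 2 + 1),
        (-1 : ℤ) ^ c * ((n - c).choose (c + 1) : ℤ) * A (n - 2 * c) := by
    apply Finset.sum_subset
    · exact Finset.range_subset_range.2 (by omega)
    · intro c hc hc2
      simp only [Finset.mem_range] at hc hc2
      have hz : (n - c).choose (c + 1) = 0 := Nat.choose_eq_zero_of_lt (by omega)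
      rw [hz]
      push_cast
      ring
  rw [Finset.sum_range_succ' _ ((n + 1) / 2), Finset.sum_range_succ' _ ((n + 2) / 2)]
  have e1 : ∀ c ∈ Finset.range ((n + 1) / 2),
      (-1 : ℤ) ^ (c + 1) * ((n + 1 - (c + 1)).choose (c + 1) : ℤ) * A (n + 2 - 2 * (c + 1)) =
        -((-1 : ℤ) ^ c * ((n - c).choose (c + 1) : ℤ) * A (n - 2 * c)) := by
    intro c hc
    simp only [Finset.mem_range] at hc
    have h1 : n + 1 - (c + 1) = n - c := by omega
    have h2 : n + 2 - 2 * (c + 1) = n - 2 * c := by omega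
    rw [h1, h2, pow_succ]
    ring
  have e2 : ∀ c ∈ Finset.range ((n + 2) / 2),
      (-1 : ℤ) ^ (c + 1) * ((n + 2 - (c + 1)).choose (c + 1) : ℤ) * A (n + 2 - 2 * (c + 1)) =
        -((-1 : ℤ) ^ c * ((n - c).choose c : ℤ) * A (n - 2 * c)) +
          -((-1 : ℤ) ^ c * ((n - c).choose (c + 1) : ℤ) * A (n - 2 * c)) := by
    intro c hc
    simp only [Finset.mem_range] at hc
    have h1 : n + 2 - (c + 1) = (n - c) + 1 := by omega
    have h2 : n + 2 - 2 * (c + 1) = n - 2 * c := by omega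
    rw [h1, h2, Nat.choose_succ_succ, pow_succ]
    push_cast
    ring
  rw [Finset.sum_congr rfl e1, Finset.sum_congr rfl e2]
  rw [Finset.sum_add_distrib]
  have hhalf : (n + 2) / 2 = n / 2 + 1 := by omega
  rw [hhalf] at *
  simp only [Finset.sum_neg_distrib]
  rw [hS1ext]
  simp only [pow_zero, Nat.sub_zero, Nat.choose_zero_right, Nat.cast_one, one_mul,
    Nat.mul_zero, mul_zero]
  ring

end Pascal
/-- `W_k^*(λ, m) = Σ_{b=0}^{⌊m/2⌋} (−1)^b · C(m−b, b) · O_k^*(λ, m−2b)`. -/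
theorem Wstar_eq_alt_sum (k : ℕ) (hk : 2 ≤ k) (lam : ℕ → ℕ) (hlam : IsShape lam)
    (hrow : RowsLE (k - 1) lam) (m : ℕ) :
    (Wstar k lam m : ℤ) = ∑ b ∈ Finset.range (m / 2 + 1),
      (-1 : ℤ) ^ b * ((m - b).choose b : ℤ) * (Ostar k lam (m - 2 * b) : ℤ) := by
  induction m using Nat.strong_induction_on generalizing lam hlam hrow with
  | _ m IH =>
  rcases m with _ | m
  · rw [wstar_le_one (by omega)]
    simp
  · rcases m with _ | n
    · rw [wstar_le_one (by omega)]
      simp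
    · show (Wstar k lam (n + 2) : ℤ) = ∑ b ∈ Finset.range ((n + 2) / 2 + 1),
        (-1 : ℤ) ^ b * ((n + 2 - b).choose b : ℤ) * (Ostar k lam (n + 2 - 2 * b) : ℤ)
      have hrec := wstar_rec hk hlam hrow n
      have hcast : ((∑ mv : MoveT k,
            if mok mv lam then Wstar k (mapply mv lam) (n + 1) else 0 : ℕ) : ℤ) =
          ∑ mv : MoveT k,
            (if mok mv lam then (Wstar k (mapply mv lam) (n + 1) : ℤ) else 0) := by
        rw [Nat.cast_sum]
        exact Finset.sum_congr rfl fun mv _ => by split_ifs <;> simp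
      have hrecZ : (Wstar k lam (n + 2) : ℤ) =
          (∑ mv : MoveT k,
            (if mok mv lam then (Wstar k (mapply mv lam) (n + 1) : ℤ) else 0)) -
            (Wstar k lam n : ℤ) := by
        have h' : ((∑ mv : MoveT k,
              if mok mv lam then Wstar k (mapply mv lam) (n + 1) else 0 : ℕ) : ℤ) =
            (Wstar k lam (n + 2) : ℤ) + (Wstar k lam n : ℤ) := by
          exact_mod_cast congrArg (Nat.cast : ℕ → ℤ) hrec
        rw [hcast] at h'
        linarith
      rw [hrecZ]
      have hW0 : (Wstar k lam n : ℤ) = ∑ b ∈ Finset.range (n / 2 + 1),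
          (-1 : ℤ) ^ b * ((n - b).choose b : ℤ) * (Ostar k lam (n - 2 * b) : ℤ) :=
        IH n (by omega) lam hlam hrow
      have hsum : (∑ mv : MoveT k,
            (if mok mv lam then (Wstar k (mapply mv lam) (n + 1) : ℤ) else 0)) =
          ∑ b ∈ Finset.range ((n + 1) / 2 + 1),
            (-1 : ℤ) ^ b * ((n + 1 - b).choose b : ℤ) *
              (Ostar k lam (n + 2 - 2 * b) : ℤ) := by
        have step1 : ∀ mv : MoveT k,
            (if mok mv lam then (Wstar k (mapply mv lam) (n + 1) : ℤ) else 0) =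
              ∑ b ∈ Finset.range ((n + 1) / 2 + 1),
                (if mok mv lam then (-1 : ℤ) ^ b * ((n + 1 - b).choose b : ℤ) *
                  (Ostar k (mapply mv lam) (n + 1 - 2 * b) : ℤ) else 0) := by
          intro mv
          by_cases hmv : mok mv lam
          · rw [if_pos hmv]
            have hsh := mapply_shape hlam hrow hmv
            rw [IH (n + 1) (by omega) (mapply mv lam) hsh.1 hsh.2]
            exact Finset.sum_congr rfl fun b _ => (if_pos hmv).symm
          · rw [if_neg hmv]
            symm
            exact Finset.sum_eq_zero fun b _ => if_neg hmv
        rw [Finset.sum_congr rfl fun mv _ => step1 mv]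
        rw [Finset.sum_comm]
        apply Finset.sum_congr rfl
        intro b hb
        have hO : Ostar k lam (n + 2 - 2 * b) =
            ∑ mv : MoveT k,
              if mok mv lam then Ostar k (mapply mv lam) (n + 1 - 2 * b) else 0 := by
          have h1 := ostar_rec hlam hrow (n + 1 - 2 * b)
          have he : n + 1 - 2 * b + 1 = n + 2 - 2 * b := by
            simp only [Finset.mem_range] at hb
            omega
          rwa [he] at h1
        rw [hO]
        push_cast
        rw [Finset.mul_sum]
        apply Finset.sum_congr rfl
        intro mv _
        by_cases hmv : mok mv lam
        · rw [if_pos hmv, if_pos hmv]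
        · rw [if_neg hmv, if_neg hmv]
          ring
      rw [hsum, hW0]
      exact pascal_step (fun j => (Ostar k lam j : ℤ)) n
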